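/- For every positive integer k, there exists a connected graph with edge metric dimension exactly k that contains the star K_{1,2^k} as a subgraph. Concretely: take a star with center c and 2^k leaves labeled by binary strings of length k, add k new vertices u_1,...,u_k, and join u_i to each leaf whose i-th coordinate is 0; then {u_1,...,u_k} is an edge resolving set. -/

import Mathlib

open SimpleGraph Finset

/-- Distance from an edge (as an unordered pair) to a vertex: the minimum
of the distances from the two endpoints. -/
noncomputable def edgeVertexDist {V : Type*} (G : SimpleGraph V) (e : Sym2 V) (v : V) : ℕ :=
  Sym2.lift ⟨fun x y => min (G.dist x v) (G.dist y v), fun x y => by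
    simp [min_comm]⟩ e

/-- `S` is a resolving set for the vertices of `G`. -/
def IsResolvingSet {V : Type*} (G : SimpleGraph V) (S : Set V) : Prop :=
  ∀ u w : V, (∀ s ∈ S, G.dist u s = G.dist w s) → u = w

/-- `S` is a resolving set for the edges of `G`. -/
def IsEdgeResolvingSet {V : Type*} (G : SimpleGraph V) (S : Set V) : Prop :=
  ∀ e ∈ G.edgeSet, ∀ f ∈ G.edgeSet,
    (∀ s ∈ S, edgeVertexDist G e s = edgeVertexDist G f s) → e = f

/-- The metric dimension of `G`. -/
noncomputable def metricDim {V : Type*} (G : SimpleGraph V) : ℕ :=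
  sInf {k | ∃ S : Finset V, S.card = k ∧ IsResolvingSet G (S : Set V)}

/-- The edge metric dimension of `G`. -/
noncomputable def edgeMetricDim {V : Type*} (G : SimpleGraph V) : ℕ :=
  sInf {k | ∃ S : Finset V, S.card = k ∧ IsEdgeResolvingSet G (S : Set V)}


namespace Star

variable {k : ℕ}

abbrev Vt (k : ℕ) := Unit ⊕ (Fin k → Bool) ⊕ Fin k

def cc : Vt k := Sum.inl ()
def lf (f : Fin k → Bool) : Vt k := Sum.inr (Sum.inl f)
def uu (i : Fin k) : Vt k := Sum.inr (Sum.inr i)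

def adjFun : Vt k → Vt k → Prop
  | Sum.inl _, Sum.inr (Sum.inl _) => True
  | Sum.inr (Sum.inl _), Sum.inl _ => True
  | Sum.inr (Sum.inl f), Sum.inr (Sum.inr i) => f i = false
  | Sum.inr (Sum.inr i), Sum.inr (Sum.inl f) => f i = false
  | _, _ => False

def G (k : ℕ) : SimpleGraph (Vt k) where
  Adj := adjFun
  symm := ⟨by rintro (⟨⟩|f|i) (⟨⟩|g|j) h <;> simp_all [adjFun]⟩
  loopless := ⟨by rintro (⟨⟩|f|i) h <;> simp_all [adjFun]⟩

lemma adj_cc_lf (f : Fin k → Bool) : (G k).Adj cc (lf f) := trivial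
lemma adj_lf_uu {f : Fin k → Bool} {i : Fin k} (h : f i = false) : (G k).Adj (lf f) (uu i) := h

lemma adj_cases {x y : Vt k} (h : (G k).Adj x y) :
    (∃ f, x = cc ∧ y = lf f) ∨ (∃ f, x = lf f ∧ y = cc) ∨
    (∃ f i, f i = false ∧ x = lf f ∧ y = uu i) ∨
    (∃ f i, f i = false ∧ x = uu i ∧ y = lf f) := by
  rcases x with ⟨⟩|f|i <;> rcases y with ⟨⟩|g|j <;>
    simp_all [G, adjFun, cc, lf, uu] <;> tauto

end Star
namespace Star
variable {k : ℕ}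

lemma walk_cc_uu (i : Fin k) : (G k).Adj cc (lf fun _ => false) ∧ (G k).Adj (lf fun _ => false) (uu i) :=
  ⟨adj_cc_lf _, adj_lf_uu rfl⟩

lemma reach_cc (v : Vt k) : (G k).Reachable cc v := by
  rcases v with ⟨⟩|f|i
  · rfl
  · exact (adj_cc_lf f).reachable
  · exact ((adj_cc_lf fun _ => false).reachable).trans (adj_lf_uu rfl).reachable

lemma conn : (G k).Connected := by
  rw [connected_iff_exists_forall_reachable]
  exact ⟨cc, reach_cc⟩

-- distance lemmas
lemma two_le_dist {x y : Vt k} (hne : x ≠ y) (hadj : ¬ (G k).Adj x y) : 2 ≤ (G k).dist x y := by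
  have h0 : (G k).dist x y ≠ 0 := by
    rw [Ne, SimpleGraph.Connected.dist_eq_zero_iff conn]; exact hne
  have h1 : (G k).dist x y ≠ 1 := by
    rw [Ne, SimpleGraph.dist_eq_one_iff_adj]; exact hadj
  omega

lemma exists_mid (x y : Vt k) (h : (G k).dist x y = 2) :
    ∃ z, (G k).Adj x z ∧ (G k).Adj z y := by
  obtain ⟨p, hp⟩ := (conn (k := k)).exists_walk_length_eq_dist x y
  rw [h] at hp
  match p, hp with
  | .cons (v := z) h1 (.cons h2 .nil), _ => exact ⟨z, h1, h2⟩

lemma dist_cc_uu (i : Fin k) : (G k).dist cc (uu i) = 2 := by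
  have h2 := two_le_dist (x := cc (k := k)) (y := uu i) (by simp [cc, uu]) (by
    intro h; rcases adj_cases h with ⟨f,h1,h2⟩|⟨f,h1,h2⟩|⟨f,j,h0,h1,h2⟩|⟨f,j,h0,h1,h2⟩ <;>
      simp_all [cc, lf, uu])
  have hle : (G k).dist cc (uu i) ≤ 2 := by
    obtain ⟨ha, hb⟩ := walk_cc_uu i
    exact SimpleGraph.dist_le (SimpleGraph.Walk.cons ha (SimpleGraph.Walk.cons hb .nil))
  omega

lemma dist_lf_uu_false {f : Fin k → Bool} {i : Fin k} (h : f i = false) :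
    (G k).dist (lf f) (uu i) = 1 :=
  SimpleGraph.dist_eq_one_iff_adj.mpr (adj_lf_uu h)

lemma dist_lf_uu_true {f : Fin k → Bool} {i : Fin k} (h : f i = true) :
    (G k).dist (lf f) (uu i) = 3 := by
  have hne : lf f ≠ uu i := by simp [lf, uu]
  have hadj : ¬ (G k).Adj (lf f) (uu i) := by
    intro hA
    rcases adj_cases hA with ⟨g,h1,h2⟩|⟨g,h1,h2⟩|⟨g,j,h0,h1,h2⟩|⟨g,j,h0,h1,h2⟩ <;>
      simp_all [cc, lf, uu]
  have h2 := two_le_dist hne hadj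
  have hn2 : (G k).dist (lf f) (uu i) ≠ 2 := by
    intro he
    obtain ⟨z, hz1, hz2⟩ := exists_mid _ _ he
    rcases adj_cases hz1 with ⟨g,h1,h2⟩|⟨g,h1,h2⟩|⟨g,j,h0,h1,h2⟩|⟨g,j,h0,h1,h2⟩ <;>
    rcases adj_cases hz2 with ⟨g',h1',h2'⟩|⟨g',h1',h2'⟩|⟨g',j',h0',h1',h2'⟩|⟨g',j',h0',h1',h2'⟩ <;>
      simp_all [cc, lf, uu]
  have hle : (G k).dist (lf f) (uu i) ≤ 3 := by
    refine SimpleGraph.dist_le (SimpleGraph.Walk.cons ((adj_cc_lf f).symm)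
      (SimpleGraph.Walk.cons (adj_cc_lf fun _ => false) (SimpleGraph.Walk.cons (adj_lf_uu rfl) .nil)))
  omega

lemma dist_uu_uu {i j : Fin k} (h : i ≠ j) : (G k).dist (uu i) (uu j) = 2 := by
  have hne : uu (k := k) i ≠ uu j := by simp [uu, h]
  have hadj : ¬ (G k).Adj (uu i) (uu j) := by
    intro hA
    rcases adj_cases hA with ⟨g,h1,h2⟩|⟨g,h1,h2⟩|⟨g,j',h0,h1,h2⟩|⟨g,j',h0,h1,h2⟩ <;>
      simp_all [cc, lf, uu]
  have h2 := two_le_dist hne hadj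
  have hle : (G k).dist (uu i) (uu j) ≤ 2 :=
    SimpleGraph.dist_le (SimpleGraph.Walk.cons ((adj_lf_uu (f := fun _ => false) rfl).symm)
      (SimpleGraph.Walk.cons (adj_lf_uu rfl) .nil))
  omega

end Star
namespace Star
variable {k : ℕ}

lemma evd_mk {V : Type*} (G : SimpleGraph V) (x y v : V) :
    edgeVertexDist G s(x, y) v = min (G.dist x v) (G.dist y v) := rfl

lemma edge_cases {e : Sym2 (Vt k)} (he : e ∈ (G k).edgeSet) :
    (∃ f, e = s(cc, lf f)) ∨ (∃ f i, f i = false ∧ e = s(lf f, uu i)) := by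
  induction e with
  | _ x y =>
    rw [SimpleGraph.mem_edgeSet] at he
    rcases adj_cases he with ⟨f,h1,h2⟩|⟨f,h1,h2⟩|⟨f,i,h0,h1,h2⟩|⟨f,i,h0,h1,h2⟩
    · exact Or.inl ⟨f, by rw [h1, h2]⟩
    · exact Or.inl ⟨f, by rw [h1, h2, Sym2.eq_swap]⟩
    · exact Or.inr ⟨f, i, h0, by rw [h1, h2]⟩
    · exact Or.inr ⟨f, i, h0, by rw [h1, h2, Sym2.eq_swap]⟩

lemma evd_A (f : Fin k → Bool) (i : Fin k) :
    edgeVertexDist (G k) s(cc, lf f) (uu i) = if f i = false then 1 else 2 := by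
  rw [evd_mk, dist_cc_uu]
  rcases hfi : f i with _ | _
  · rw [dist_lf_uu_false hfi]; simp
  · rw [dist_lf_uu_true hfi]; simp

lemma evd_B {f : Fin k → Bool} {j : Fin k} (hj : f j = false) (i : Fin k) :
    edgeVertexDist (G k) s(lf f, uu j) (uu i) =
      if i = j then 0 else if f i = false then 1 else 2 := by
  rw [evd_mk]
  by_cases hij : i = j
  · subst hij; simp [SimpleGraph.dist_self, dist_comm]
  · rw [if_neg hij, dist_uu_uu (fun h => hij h.symm)]
    rcases hfi : f i with _ | _
    · rw [dist_lf_uu_false hfi]; simp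
    · rw [dist_lf_uu_true hfi]; simp

def Suu (k : ℕ) : Finset (Vt k) := Finset.univ.image (uu (k := k))

lemma uu_inj : Function.Injective (uu (k := k)) := fun i j h => by
  simpa [uu] using h

lemma Suu_card : (Suu k).card = k := by
  rw [Suu, Finset.card_image_of_injective _ uu_inj, Finset.card_univ, Fintype.card_fin]

lemma Suu_resolves : IsEdgeResolvingSet (G k) (Suu k : Set (Vt k)) := by
  intro e he e' he' hsame
  have huu : ∀ i : Fin k, edgeVertexDist (G k) e (uu i) = edgeVertexDist (G k) e' (uu i) := by
    intro i
    exact hsame (uu i) (by simp [Suu])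
  rcases edge_cases he with ⟨f, rfl⟩ | ⟨f, j, hj, rfl⟩ <;>
    rcases edge_cases he' with ⟨f', rfl⟩ | ⟨f', j', hj', rfl⟩
  · have hf : f = f' := by
      funext i
      have := huu i
      rw [evd_A, evd_A] at this
      rcases h1 : f i <;> rcases h2 : f' i <;> simp_all
    rw [hf]
  · have := huu j'
    rw [evd_A, evd_B hj'] at this
    simp at this
    rcases h1 : f j' <;> simp_all
  · have := huu j
    rw [evd_A, evd_B hj] at this
    simp at this
    rcases h1 : f' j <;> simp_all
  · have hjj : j = j' := by
      by_contra hne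
      have := huu j
      rw [evd_B hj, evd_B hj'] at this
      rw [if_pos rfl, if_neg hne] at this
      rcases h1 : f' j <;> simp_all
    subst hjj
    have hf : f = f' := by
      funext i
      by_cases hij : i = j
      · subst hij; rw [hj, hj']
      · have := huu i
        rw [evd_B hj, evd_B hj', if_neg hij, if_neg hij] at this
        rcases h1 : f i <;> rcases h2 : f' i <;> simp_all
    rw [hf]

end Star
namespace Star
variable {k : ℕ}

lemma lower_bound (S : Finset (Vt k)) (hS : IsEdgeResolvingSet (G k) (S : Set (Vt k))) :
    k ≤ S.card := by
  classical
  have key : Function.Injective (fun (f : Fin k → Bool) (s : S) =>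
      decide (edgeVertexDist (G k) s(cc, lf f) s.val = (G k).dist cc s.val)) := by
    intro f f' hff
    have hmem : ∀ g : Fin k → Bool, s(cc (k := k), lf g) ∈ (G k).edgeSet := fun g => adj_cc_lf g
    have heq : s(cc (k := k), lf f) = s(cc, lf f') := by
      apply hS _ (hmem f) _ (hmem f')
      intro s hs
      have hb := congrFun hff ⟨s, hs⟩
      simp only [decide_eq_decide] at hb
      rw [evd_mk, evd_mk]
      have tri : ∀ g : Fin k → Bool, (G k).dist cc s ≤ 1 + (G k).dist (lf g) s := by
        intro g
        calc (G k).dist cc s ≤ (G k).dist cc (lf g) + (G k).dist (lf g) s :=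
              conn.dist_triangle
          _ = 1 + (G k).dist (lf g) s := by
              rw [SimpleGraph.dist_eq_one_iff_adj.mpr (adj_cc_lf g)]
      have t1 := tri f
      have t2 := tri f'
      rw [evd_mk, evd_mk] at hb
      omega
    have : lf (k := k) f = lf f' := by
      rw [Sym2.eq_iff] at heq
      rcases heq with ⟨-, h⟩ | ⟨h, -⟩
      · exact h
      · exact absurd h (by simp [cc, lf])
    simpa [lf] using this
  have hcard := Fintype.card_le_of_injective _ key
  simp only [Fintype.card_fun, Fintype.card_fin, Fintype.card_bool, Fintype.card_coe] at hcard
  exact (Nat.pow_le_pow_iff_right (by norm_num : 1 < 2)).mp hcard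

lemma edim_eq : edgeMetricDim (G k) = k := by
  have hmem : k ∈ {m | ∃ S : Finset (Vt k), S.card = m ∧
      IsEdgeResolvingSet (G k) (S : Set (Vt k))} := ⟨Suu k, Suu_card, Suu_resolves⟩
  apply le_antisymm
  · exact Nat.sInf_le hmem
  · apply le_csInf ⟨k, hmem⟩
    rintro m ⟨S, rfl, hS⟩
    exact lower_bound S hS

end Star


/-- For every `k ≥ 1` there is a connected graph with edge metric dimension
exactly `k` containing the star `K_{1,2^k}` as a subgraph. -/
theorem stmt_6 (k : ℕ) (hk : 1 ≤ k) :
    ∃ (V : Type) (_ : Fintype V) (G : SimpleGraph V),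
      G.Connected ∧ edgeMetricDim G = k ∧
        ∃ (c : V) (L : Finset V), L.card = 2 ^ k ∧ c ∉ L ∧ ∀ v ∈ L, G.Adj c v := by
  classical
  refine ⟨Star.Vt k, inferInstance, Star.G k, Star.conn, Star.edim_eq, Star.cc, Finset.univ.image (Star.lf (k := k)), ?_, ?_, ?_⟩
  · rw [Finset.card_image_of_injective _ (fun f g h => by simpa [Star.lf] using h),
      Finset.card_univ]
    simp
  · simp [Star.cc, Star.lf]
  · intro v hv
    simp only [Finset.mem_image] at hv
    obtain ⟨f, -, rfl⟩ := hv
    exact Star.adj_cc_lf f
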